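/- arXiv:1304.4407 — 4 statements merged into one kernel-verified Lean document; each statement's English description precedes it below -/
import Mathlib

section
/- Let λ > 0 and y ∈ ℝ^M, and let x⋆ be a minimizer of problem (P). Suppose the norm A is decomposable at L* x⋆ with data (T, e), and set S := T⊥. Assume the source condition SC(x⋆) holds with (η, α) and that A*(P_S α) < 1, and assume Φ is injective on ker(L_S*), i.e. ker(Φ) ∩ ker(P_S ∘ L*) = {0}. Then x⋆ is the unique minimizer of (P). -/
open RealInnerProductSpace

noncomputable section

abbrev Euc (n : ℕ) := EuclideanSpace ℝ (Fin n)

def proj {n : ℕ} (V : Submodule ℝ (Euc n)) : Euc n →L[ℝ] Euc n :=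
  V.subtypeL.comp (V.orthogonalProjection)

def dualNorm {n : ℕ} (A : Euc n → ℝ) (α : Euc n) : ℝ :=
  sSup {r : ℝ | ∃ v : Euc n, A v ≤ 1 ∧ r = ⟪α, v⟫}

def subdiff {n : ℕ} (f : Euc n → ℝ) (x : Euc n) : Set (Euc n) :=
  {g : Euc n | ∀ y : Euc n, f x + ⟪g, y - x⟫ ≤ f y}

def IsNorm {n : ℕ} (A : Euc n → ℝ) : Prop :=
  (∀ x, A x = 0 ↔ x = 0) ∧ (∀ (c : ℝ) (x : Euc n), A (c • x) = |c| * A x) ∧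
    (∀ x y, A (x + y) ≤ A x + A y)

def Decomposable {n : ℕ} (A : Euc n → ℝ) (u : Euc n) (T : Submodule ℝ (Euc n)) (e : Euc n) :
    Prop :=
  e ∈ T ∧
  subdiff A u = {α : Euc n | proj T α = e ∧ dualNorm A (proj Tᗮ α) ≤ 1} ∧
  ∀ z : Euc n, z ∈ Tᗮ →
    A z = sSup {r : ℝ | ∃ v ∈ (Tᗮ : Submodule ℝ (Euc n)), dualNorm A v ≤ 1 ∧ r = ⟪v, z⟫}

def obj {N M P : ℕ} (Φ : Euc N →L[ℝ] Euc M) (L : Euc P →L[ℝ] Euc N) (A : Euc P → ℝ)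
    (y : Euc M) (lam : ℝ) (x : Euc N) : ℝ :=
  (1/2) * ‖y - Φ x‖^2 + lam * A (ContinuousLinearMap.adjoint L x)

def SC {N M P : ℕ} (Φ : Euc N →L[ℝ] Euc M) (L : Euc P →L[ℝ] Euc N) (A : Euc P → ℝ)
    (x : Euc N) (η : Euc M) (α : Euc P) : Prop :=
  α ∈ subdiff A (ContinuousLinearMap.adjoint L x) ∧
  ContinuousLinearMap.adjoint Φ η = L α ∧
  L α ∈ subdiff (fun z => A (ContinuousLinearMap.adjoint L z)) x

def breg {n : ℕ} (A : Euc n → ℝ) (α u u₀ : Euc n) : ℝ :=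
  A u - A u₀ - ⟪α, u - u₀⟫

section Helpers

variable {n : ℕ}

lemma Azero {A : Euc n → ℝ} (hA : IsNorm A) : A 0 = 0 := (hA.1 0).mpr rfl

lemma Aneg {A : Euc n → ℝ} (hA : IsNorm A) (z : Euc n) : A (-z) = A z := by
  have := hA.2.1 (-1) z
  simpa using this

lemma Annoneg {A : Euc n → ℝ} (hA : IsNorm A) (z : Euc n) : 0 ≤ A z := by
  have ht := hA.2.2 z (-z)
  rw [Aneg hA] at ht
  simp [Azero hA] at ht
  linarith

lemma Asum {A : Euc n → ℝ} (hA : IsNorm A) {ι : Type*} (s : Finset ι) (f : ι → Euc n) :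
    A (∑ i ∈ s, f i) ≤ ∑ i ∈ s, A (f i) := by
  classical
  induction s using Finset.induction with
  | empty => simp [Azero hA]
  | insert _ _ hi ih =>
      rw [Finset.sum_insert hi, Finset.sum_insert hi]
      exact le_trans (hA.2.2 _ _) (by linarith)

lemma exists_upper {A : Euc n → ℝ} (hA : IsNorm A) : ∃ C : ℝ, ∀ v, A v ≤ C * ‖v‖ := by
  refine ⟨∑ i, A (EuclideanSpace.single i (1:ℝ)), fun v => ?_⟩
  have hv : v = ∑ i, v i • EuclideanSpace.single i (1:ℝ) := by
    have := (EuclideanSpace.basisFun (Fin n) ℝ).sum_repr v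
    simp only [EuclideanSpace.basisFun_repr, EuclideanSpace.basisFun_apply] at this
    exact this.symm
  calc A v = A (∑ i, v i • EuclideanSpace.single i (1:ℝ)) := by rw [← hv]
    _ ≤ ∑ i, A (v i • EuclideanSpace.single i (1:ℝ)) := Asum hA _ _
    _ = ∑ i, |v i| * A (EuclideanSpace.single i (1:ℝ)) := by
        simp only [hA.2.1]
    _ ≤ ∑ i, ‖v‖ * A (EuclideanSpace.single i (1:ℝ)) := by
        apply Finset.sum_le_sum
        intro i _
        apply mul_le_mul_of_nonneg_right _ (Annoneg hA _)
        have h1 : ⟪EuclideanSpace.single i (1:ℝ), v⟫ = v i := by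
          simp [EuclideanSpace.inner_single_left]
        have h2 := abs_real_inner_le_norm (EuclideanSpace.single i (1:ℝ)) v
        rw [h1, EuclideanSpace.norm_single] at h2
        simpa using h2
    _ = (∑ i, A (EuclideanSpace.single i (1:ℝ))) * ‖v‖ := by
        rw [Finset.sum_mul]; simp [mul_comm]

lemma exists_lower {A : Euc n → ℝ} (hA : IsNorm A) :
    ∃ m : ℝ, 0 < m ∧ ∀ v, m * ‖v‖ ≤ A v := by
  rcases subsingleton_or_nontrivial (Euc n) with hs | hs
  · exact ⟨1, one_pos, fun v => by rw [Subsingleton.elim v 0]; simp [Azero hA]⟩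
  · obtain ⟨C, hC⟩ := exists_upper hA
    have hcont : Continuous A := by
      have hlip : LipschitzWith (Real.toNNReal C) A := by
        rw [lipschitzWith_iff_dist_le_mul]
        intro a b
        have hsub : ∀ p q : Euc n, A p - A q ≤ A (p - q) := by
          intro p q
          have := hA.2.2 (p - q) q
          simp only [sub_add_cancel] at this
          linarith
        have h1 := hsub a b
        have h2 := hsub b a
        rw [show b - a = -(a-b) from (neg_sub a b).symm, Aneg hA] at h2
        have h3 : A (a - b) ≤ C * ‖a - b‖ := hC _
        have h4 : C * ‖a - b‖ ≤ (Real.toNNReal C : ℝ) * ‖a - b‖ :=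
          mul_le_mul_of_nonneg_right (Real.le_coe_toNNReal C) (norm_nonneg _)
        rw [Real.dist_eq, dist_eq_norm, abs_sub_le_iff]
        constructor <;> linarith
      exact hlip.continuous
    have hcomp : IsCompact (Metric.sphere (0:Euc n) 1) := isCompact_sphere 0 1
    have hne : (Metric.sphere (0:Euc n) 1).Nonempty := NormedSpace.sphere_nonempty.mpr zero_le_one
    obtain ⟨v₀, hv₀mem, hv₀min⟩ := hcomp.exists_isMinOn hne hcont.continuousOn
    have hv₀norm : ‖v₀‖ = 1 := by simpa using hv₀mem
    have hpos : 0 < A v₀ := by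
      rcases (Annoneg hA v₀).lt_or_eq with h | h
      · exact h
      · exfalso
        have hz := (hA.1 v₀).mp h.symm
        rw [hz] at hv₀norm
        simp at hv₀norm
    refine ⟨A v₀, hpos, fun v => ?_⟩
    by_cases hv : v = 0
    · simp [hv, Azero hA]
    · have hn : (0:ℝ) < ‖v‖ := norm_pos_iff.mpr hv
      have hmem : ‖v‖⁻¹ • v ∈ Metric.sphere (0:Euc n) 1 := by
        simp [norm_smul, abs_of_pos (inv_pos.mpr hn), inv_mul_cancel₀ hn.ne']
      have hle := isMinOn_iff.mp hv₀min _ hmem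
      rw [hA.2.1, abs_of_pos (inv_pos.mpr hn)] at hle
      have := mul_le_mul_of_nonneg_left hle hn.le
      rw [← mul_assoc, mul_inv_cancel₀ hn.ne', one_mul] at this
      linarith [this]

lemma dualNorm_bddAbove {A : Euc n → ℝ} (hA : IsNorm A) (α : Euc n) :
    BddAbove {r : ℝ | ∃ v : Euc n, A v ≤ 1 ∧ r = ⟪α, v⟫} := by
  obtain ⟨m, hm, hlow⟩ := exists_lower hA
  refine ⟨‖α‖ * m⁻¹, ?_⟩
  rintro r ⟨v, hv, rfl⟩
  have h1 : ‖v‖ ≤ m⁻¹ := by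
    have h := le_trans (hlow v) hv
    have h2 := mul_le_mul_of_nonneg_left h (inv_pos.mpr hm).le
    rwa [← mul_assoc, inv_mul_cancel₀ hm.ne', one_mul, mul_one] at h2
  calc ⟪α, v⟫ ≤ ‖α‖ * ‖v‖ := real_inner_le_norm α v
    _ ≤ ‖α‖ * m⁻¹ := mul_le_mul_of_nonneg_left h1 (norm_nonneg α)

lemma dualNorm_nonneg {A : Euc n → ℝ} (hA : IsNorm A) (α : Euc n) : 0 ≤ dualNorm A α := by
  apply le_csSup (dualNorm_bddAbove hA α)
  exact ⟨0, by simp [Azero hA], by simp⟩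

lemma dualNorm_zero {A : Euc n → ℝ} (hA : IsNorm A) : dualNorm A (0 : Euc n) = 0 := by
  have hset : {r : ℝ | ∃ v : Euc n, A v ≤ 1 ∧ r = ⟪(0:Euc n), v⟫} = {0} := by
    ext r
    simp only [Set.mem_setOf_eq, Set.mem_singleton_iff, inner_zero_left]
    constructor
    · rintro ⟨v, _, rfl⟩; rfl
    · rintro rfl; exact ⟨0, by simp [Azero hA], rfl⟩
  rw [dualNorm, hset, csSup_singleton]

lemma inner_le_dualNorm {A : Euc n → ℝ} (hA : IsNorm A) (α z : Euc n) :
    ⟪α, z⟫ ≤ dualNorm A α * A z := by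
  by_cases hz : z = 0
  · simp [hz, Azero hA]
  · have hAz : 0 < A z := by
      rcases (Annoneg hA z).lt_or_eq with h | h
      · exact h
      · exact absurd ((hA.1 z).mp h.symm) hz
    have hv : A ((A z)⁻¹ • z) ≤ 1 := by
      rw [hA.2.1, abs_of_pos (inv_pos.mpr hAz), inv_mul_cancel₀ hAz.ne']
    have hle := le_csSup (dualNorm_bddAbove hA α) ⟨(A z)⁻¹ • z, hv, rfl⟩
    rw [real_inner_smul_right] at hle
    have h2 := mul_le_mul_of_nonneg_left hle hAz.le
    rw [← mul_assoc, mul_inv_cancel₀ hAz.ne', one_mul] at h2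
    calc ⟪α, z⟫ ≤ A z * dualNorm A α := h2
      _ = dualNorm A α * A z := mul_comm _ _

lemma proj_mem (V : Submodule ℝ (Euc n)) (a : Euc n) : proj V a ∈ V :=
  SetLike.coe_mem (V.orthogonalProjectionOnto a)

lemma proj_eq_self {V : Submodule ℝ (Euc n)} {a : Euc n} (h : a ∈ V) : proj V a = a :=
  V.starProjection_eq_self_iff.mpr h

lemma proj_eq_zero {V : Submodule ℝ (Euc n)} {a : Euc n} (h : a ∈ Vᗮ) : proj V a = 0 := by
  show ((V.orthogonalProjectionOnto a : V) : Euc n) = 0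
  rw [Submodule.orthogonalProjectionOnto_apply_of_mem_orthogonal h]
  rfl

lemma inner_proj_left (V : Submodule ℝ (Euc n)) (a b : Euc n) :
    ⟪proj V a, b⟫ = ⟪a, proj V b⟫ :=
  Submodule.inner_starProjection_left_eq_right V a b

lemma proj_add_proj (V : Submodule ℝ (Euc n)) (a : Euc n) : proj V a + proj Vᗮ a = a :=
  Submodule.starProjection_add_starProjection_orthogonal (K := V) a

lemma inner_proj_of_mem {V : Submodule ℝ (Euc n)} {a : Euc n} (ha : a ∈ V) (z : Euc n) :
    ⟪a, proj V z⟫ = ⟪a, z⟫ := by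
  rw [← inner_proj_left, proj_eq_self ha]

end Helpers

set_option maxHeartbeats 1000000 in
theorem stmt1 {N M P : ℕ} (Φ : Euc N →L[ℝ] Euc M) (L : Euc P →L[ℝ] Euc N)
    (A : Euc P → ℝ) (hA : IsNorm A) (lam : ℝ) (hlam : 0 < lam) (y : Euc M)
    (xs : Euc N) (hmin : ∀ x, obj Φ L A y lam xs ≤ obj Φ L A y lam x)
    (T : Submodule ℝ (Euc P)) (e : Euc P)
    (hdec : Decomposable A (ContinuousLinearMap.adjoint L xs) T e)
    (η : Euc M) (α : Euc P) (hSC : SC Φ L A xs η α)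
    (hsat : dualNorm A (proj Tᗮ α) < 1)
    (hinj : ∀ h : Euc N, Φ h = 0 → proj Tᗮ (ContinuousLinearMap.adjoint L h) = 0 → h = 0) :
    ∀ x : Euc N, (∀ z, obj Φ L A y lam x ≤ obj Φ L A y lam z) → x = xs := by
  intro x hx
  set Ls := ContinuousLinearMap.adjoint L with hLsdef
  have heq : obj Φ L A y lam x = obj Φ L A y lam xs := le_antisymm (hx xs) (hmin x)
  set a := y - Φ x with ha
  set b := y - Φ xs with hb
  -- Step 1: Φ x = Φ xs
  have hab : a = b := by
    have hm := hmin ((2:ℝ)⁻¹ • (x + xs))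
    have h1 : y - Φ ((2:ℝ)⁻¹ • (x + xs)) = (2:ℝ)⁻¹ • (a + b) := by
      rw [map_smul, map_add, ha, hb]
      module
    have h3 : Ls ((2:ℝ)⁻¹ • (x + xs)) = (2:ℝ)⁻¹ • (Ls x + Ls xs) := by
      rw [map_smul, map_add]
    have h4 : A (Ls ((2:ℝ)⁻¹ • (x + xs))) ≤ (2:ℝ)⁻¹ * (A (Ls x) + A (Ls xs)) := by
      rw [h3, smul_add]
      refine le_trans (hA.2.2 _ _) ?_
      rw [hA.2.1, hA.2.1, abs_of_pos (show (0:ℝ) < (2:ℝ)⁻¹ by norm_num)]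
      linarith
    have h2 : ‖(2:ℝ)⁻¹ • (a + b)‖^2 = (4:ℝ)⁻¹ * ‖a + b‖^2 := by
      rw [norm_smul, mul_pow]
      norm_num
    have hpar : ‖a+b‖^2 + ‖a-b‖^2 = 2*(‖a‖^2 + ‖b‖^2) := by
      exact parallelogram_law_with_norm ℝ a b
    simp only [obj, h1, h2] at hm
    simp only [obj, ← ha, ← hb] at heq
    have h4' := mul_le_mul_of_nonneg_left h4 hlam.le
    have h5 : ‖a - b‖^2 ≤ 0 := by nlinarith
    have h6 : ‖a - b‖ = 0 := by nlinarith [norm_nonneg (a - b)]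
    exact sub_eq_zero.mp (norm_eq_zero.mp h6)
  have hΦeq : Φ x = Φ xs := sub_right_injective hab
  have hAeq : A (Ls x) = A (Ls xs) := by
    simp only [obj, ← ha, ← hb, hab] at heq
    have := heq
    field_simp at this
    exact mul_left_cancel₀ hlam.ne' (by linarith)
  set h := x - xs with hh
  have hΦh : Φ h = 0 := by rw [hh, map_sub, hΦeq, sub_self]
  have hαw : ⟪α, Ls h⟫ = 0 := by
    rw [hLsdef, ContinuousLinearMap.adjoint_inner_right, ← hSC.2.1,
      ContinuousLinearMap.adjoint_inner_left, hΦh, inner_zero_right]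
  have hPTα : proj T α = e := by
    have hm := hSC.1
    rw [hdec.2.1] at hm
    exact hm.1
  have he : e = α - proj Tᗮ α := by
    have hs := proj_add_proj T α
    rw [hPTα] at hs
    exact eq_sub_of_add_eq hs
  have heT2 : e ∈ Tᗮᗮ := by
    rw [Submodule.orthogonal_orthogonal]
    exact hdec.1
  -- key inequality
  have key : ∀ v : Euc P, v ∈ Tᗮ → dualNorm A v ≤ 1 → ⟪v, Ls h⟫ ≤ ⟪proj Tᗮ α, Ls h⟫ := by
    intro v hvS hv1
    have hmem : e + v ∈ subdiff A (Ls xs) := by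
      rw [hdec.2.1]
      constructor
      · rw [map_add, proj_eq_self hdec.1, proj_eq_zero hvS, add_zero]
      · rw [map_add, proj_eq_zero heT2, proj_eq_self hvS, zero_add]
        exact hv1
    have hsub := hmem (Ls x)
    rw [hAeq] at hsub
    have h7 : ⟪e + v, Ls x - Ls xs⟫ ≤ 0 := by linarith
    have h8 : Ls x - Ls xs = Ls h := by rw [hh, map_sub]
    rw [h8, he] at h7
    rw [sub_add_eq_add_sub, inner_sub_left, inner_add_left] at h7
    linarith [hαw, h7]
  have hzmem : proj Tᗮ (Ls h) ∈ Tᗮ := proj_mem Tᗮ (Ls h)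
  have hsup := hdec.2.2 (proj Tᗮ (Ls h)) hzmem
  have hkey2 : ∀ v : Euc P, v ∈ Tᗮ → dualNorm A v ≤ 1 →
      ⟪v, proj Tᗮ (Ls h)⟫ ≤ ⟪proj Tᗮ α, proj Tᗮ (Ls h)⟫ := by
    intro v hvS hv1
    rw [inner_proj_of_mem hvS, inner_proj_of_mem (proj_mem Tᗮ α)]
    exact key v hvS hv1
  have hc0 : 0 ≤ ⟪proj Tᗮ α, proj Tᗮ (Ls h)⟫ := by
    have := hkey2 0 (zero_mem _) (by rw [dualNorm_zero hA]; exact zero_le_one)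
    simpa using this
  have hbound : A (proj Tᗮ (Ls h)) ≤ ⟪proj Tᗮ α, proj Tᗮ (Ls h)⟫ := by
    rw [hsup]
    apply Real.sSup_le _ hc0
    rintro r ⟨v, hvS, hv1, rfl⟩
    exact hkey2 v hvS hv1
  have hfin : ⟪proj Tᗮ α, proj Tᗮ (Ls h)⟫ ≤ dualNorm A (proj Tᗮ α) * A (proj Tᗮ (Ls h)) :=
    inner_le_dualNorm hA _ _
  have hApos := Annoneg hA (proj Tᗮ (Ls h))
  have hAzero : A (proj Tᗮ (Ls h)) = 0 := by nlinarith
  have hPzero : proj Tᗮ (Ls h) = 0 := (hA.1 _).mp hAzero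
  have hh0 : h = 0 := hinj h hΦh hPzero
  rw [hh] at hh0
  exact sub_eq_zero.mp hh0
end
end

section
/- Fix x₀ ∈ ℝ^N, ε > 0, c > 0, and w ∈ ℝ^M with ‖w‖₂ ≤ ε; set y := Φ x₀ + w and λ := c ε. Suppose the source condition SC(x₀) holds with (η, α). Then every minimizer x⋆ of problem (P) satisfies D_α(L* x⋆, L* x₀) ≤ ε (1 + c‖η‖₂/2)² / c. -/
open RealInnerProductSpace

noncomputable section

lemma aux_small_t (a b C : ℝ) (hC : 0 ≤ C) (h : ∀ t : ℝ, 0 < t → t ≤ 1 → a ≤ b + t * C) :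
    a ≤ b := by
  apply le_of_forall_pos_le_add
  intro δ hδ
  have ht0 : (0:ℝ) < min 1 (δ / (C + 1)) := lt_min one_pos (by positivity)
  have h1 := h _ ht0 (min_le_left _ _)
  have h2 : min 1 (δ / (C + 1)) * C ≤ δ := by
    calc min 1 (δ / (C + 1)) * C ≤ (δ / (C + 1)) * C :=
          mul_le_mul_of_nonneg_right (min_le_right _ _) hC
      _ ≤ δ := by
          rw [div_mul_eq_mul_div, div_le_iff₀ (by linarith)]
          nlinarith
  linarith


lemma scalar_key (t lam a b X Q : ℝ) (ht0 : 0 < t) (R2 : ℝ)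
    (hm : 1/2 * R2 + lam * a ≤ 1/2 * (R2 - 2 * (t * X) + t ^ 2 * Q) + lam * ((1 - t) * a + t * b)) :
    X ≤ lam * (b - a) + t * (Q / 2) := by
  have h : t * X ≤ t * (lam * (b - a) + t * (Q / 2)) := by nlinarith
  exact le_of_mul_le_mul_left h ht0

lemma scalar_D (p a b : ℝ) (hcs : p ≤ a * b) (ha : 0 ≤ a) :
    p - a ^ 2 ≤ 1/4 * b ^ 2 := by
  nlinarith [sq_nonneg (a - b / 2)]

lemma scalar_final (B lam eps c n : ℝ) (heps : 0 < eps) (hc : 0 < c) (hn : 0 ≤ n)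
    (hlam : lam = c * eps) (hfin : lam * B ≤ 1/4 * (eps + lam * n) ^ 2) :
    B * c ≤ eps * (1 + c * n / 2) ^ 2 := by
  subst hlam
  have h1 : 1/4 * (eps + c * eps * n) ^ 2 ≤ eps * (eps * (1 + c * n / 2) ^ 2) := by
    nlinarith [sq_nonneg eps, mul_nonneg (mul_nonneg (sq_nonneg eps) hc.le) hn]
  have h2 : eps * (B * c) ≤ eps * (eps * (1 + c * n / 2) ^ 2) := by nlinarith
  exact le_of_mul_le_mul_left h2 heps

theorem stmt3 {N M P : ℕ} (Φ : Euc N →L[ℝ] Euc M) (L : Euc P →L[ℝ] Euc N)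
    (A : Euc P → ℝ) (hA : IsNorm A) (x₀ : Euc N)
    (ε c : ℝ) (hε : 0 < ε) (hc : 0 < c) (w : Euc M) (hw : ‖w‖ ≤ ε)
    (η : Euc M) (α : Euc P) (hSC : SC Φ L A x₀ η α)
    (xs : Euc N)
    (hmin : ∀ x, obj Φ L A (Φ x₀ + w) (c * ε) xs ≤ obj Φ L A (Φ x₀ + w) (c * ε) x) :
    breg A α (ContinuousLinearMap.adjoint L xs) (ContinuousLinearMap.adjoint L x₀) ≤ ε * (1 + c * ‖η‖ / 2) ^ 2 / c := by
  obtain ⟨hA0, hAsmul, hAadd⟩ := hA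
  obtain ⟨hα, hadj, hsub⟩ := hSC
  set Ls := ContinuousLinearMap.adjoint L with hLs
  set lam := c * ε with hlam
  have hlam0 : 0 < lam := mul_pos hc hε
  set y := Φ x₀ + w with hy
  set r := y - Φ xs with hr
  have hrw : r - w = Φ x₀ - Φ xs := by rw [hr, hy]; abel
  -- Step A : first order optimality
  have hstepA : ⟪r, r - w⟫ ≤ lam * (A (Ls x₀) - A (Ls xs)) := by
    have h2 : ⟪r, Φ x₀ - Φ xs⟫ ≤ lam * (A (Ls x₀) - A (Ls xs)) := by
      apply aux_small_t _ _ (‖Φ x₀ - Φ xs‖ ^ 2 / 2) (by positivity)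
      intro t ht0 ht1
      have hm := hmin (xs + t • (x₀ - xs))
      unfold obj at hm
      have he1 : y - Φ (xs + t • (x₀ - xs)) = r - t • (Φ x₀ - Φ xs) := by
        rw [hr]; simp only [map_add, map_smul, smul_sub, map_sub]; abel
      have he2 : Ls (xs + t • (x₀ - xs)) = (1 - t) • Ls xs + t • Ls x₀ := by
        simp only [map_add, map_smul, map_sub, sub_smul, smul_sub, one_smul]
        abel
      have hAc : A (Ls (xs + t • (x₀ - xs))) ≤ (1 - t) * A (Ls xs) + t * A (Ls x₀) := by
        rw [he2]
        calc A ((1 - t) • Ls xs + t • Ls x₀) ≤ A ((1 - t) • Ls xs) + A (t • Ls x₀) :=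
              hAadd _ _
          _ = (1 - t) * A (Ls xs) + t * A (Ls x₀) := by
              rw [hAsmul, hAsmul, abs_of_nonneg (by linarith), abs_of_nonneg (by linarith)]
      have hnorm : ‖r - t • (Φ x₀ - Φ xs)‖ ^ 2 =
          ‖r‖ ^ 2 - 2 * (t * ⟪r, Φ x₀ - Φ xs⟫) + t ^ 2 * ‖Φ x₀ - Φ xs‖ ^ 2 := by
        rw [norm_sub_sq_real, real_inner_smul_right, norm_smul, mul_pow]
        simp [Real.norm_eq_abs, sq_abs]
      rw [he1, hnorm] at hm
      have hm2 : 1/2 * ‖r‖ ^ 2 + lam * A (Ls xs) ≤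
          1/2 * (‖r‖ ^ 2 - 2 * (t * ⟪r, Φ x₀ - Φ xs⟫) + t ^ 2 * ‖Φ x₀ - Φ xs‖ ^ 2) +
            lam * ((1 - t) * A (Ls xs) + t * A (Ls x₀)) := by
        have := mul_le_mul_of_nonneg_left hAc hlam0.le
        linarith
      exact scalar_key t lam (A (Ls xs)) (A (Ls x₀)) _ _ ht0 _ hm2
    rw [hrw]
    exact h2
  -- Step B : adjoint identity
  have hstepB : ⟪α, Ls xs - Ls x₀⟫ = ⟪η, Φ xs - Φ x₀⟫ := by
    have h1 : Ls xs - Ls x₀ = Ls (xs - x₀) := by rw [map_sub]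
    have h2 : Φ xs - Φ x₀ = Φ (xs - x₀) := by rw [map_sub]
    rw [h1, h2, hLs, ContinuousLinearMap.adjoint_inner_right (𝕜 := ℝ), ← hadj,
      ContinuousLinearMap.adjoint_inner_left (𝕜 := ℝ)]
  -- Step C : combine
  have hPhi : Φ xs - Φ x₀ = w - r := by rw [hr, hy]; abel
  have hC : lam * breg A α (Ls xs) (Ls x₀) ≤ ⟪r - lam • η, w - r⟫ := by
    have hinner : ⟪r - lam • η, w - r⟫ = ⟪r, w - r⟫ - lam * ⟪η, w - r⟫ := by
      rw [inner_sub_left, real_inner_smul_left]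
    have hbe : breg A α (Ls xs) (Ls x₀) =
        A (Ls xs) - A (Ls x₀) - ⟪η, w - r⟫ := by
      rw [breg, hstepB, hPhi]
    have hneg : ⟪r, w - r⟫ = -⟪r, r - w⟫ := by
      rw [← inner_neg_right]; congr 1; abel
    rw [hbe, hinner, hneg]
    have hexp : lam * (A (Ls xs) - A (Ls x₀) - ⟪η, w - r⟫) =
        -(lam * (A (Ls x₀) - A (Ls xs))) - lam * ⟪η, w - r⟫ := by ring
    rw [hexp]
    have := mul_le_mul_of_nonneg_left hstepA hlam0.le
    linarith [this]
  -- Step D : quadratic bound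
  have hD : ⟪r - lam • η, w - r⟫ ≤ 1/4 * ‖w - lam • η‖ ^ 2 := by
    have hid : w - r = (w - lam • η) - (r - lam • η) := by abel
    rw [hid, inner_sub_right, real_inner_self_eq_norm_sq]
    exact scalar_D _ _ _ (real_inner_le_norm (r - lam • η) (w - lam • η)) (norm_nonneg _)
  -- Step E : conclude
  have hv : ‖w - lam • η‖ ≤ ε + lam * ‖η‖ := by
    calc ‖w - lam • η‖ ≤ ‖w‖ + ‖lam • η‖ := norm_sub_le _ _
      _ ≤ ε + lam * ‖η‖ := by
          rw [norm_smul, Real.norm_eq_abs, abs_of_pos hlam0]; linarith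
  have hfin : lam * breg A α (Ls xs) (Ls x₀) ≤ 1/4 * (ε + lam * ‖η‖) ^ 2 := by
    have h1 := hC.trans hD
    have h2 : ‖w - lam • η‖ ^ 2 ≤ (ε + lam * ‖η‖) ^ 2 := by
      apply sq_le_sq' _ hv
      have : 0 ≤ ε + lam * ‖η‖ := by positivity
      linarith [norm_nonneg (w - lam • η)]
    linarith
  rw [le_div_iff₀ hc]
  exact scalar_final _ lam ε c ‖η‖ hε hc (norm_nonneg η) hlam hfin
end
end

section
/- Fix x₀ ∈ ℝ^N, ε > 0, c > 0, and w ∈ ℝ^M with ‖w‖₂ ≤ ε; set y := Φ x₀ + w and λ := c ε. Suppose the source condition SC(x₀) holds with (η, α). Then every minimizer x⋆ of problem (P) satisfies ‖Φ x⋆ − Φ x₀‖₂ ≤ ε (2 + c‖η‖₂). -/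
open RealInnerProductSpace

noncomputable section

lemma aux_scalar (r K : ℝ) (hr0 : 0 ≤ r) (hK0 : 0 ≤ K)
    (key : ∀ t : ℝ, 0 < t → t ≤ 1 → r ^ 2 ≤ K * r + (t / 2) * r ^ 2) : r ≤ K := by
  have hfin : r ^ 2 ≤ K * r := by
    refine le_of_forall_pos_le_add ?_
    intro δ hδ
    have htpos : 0 < min 1 (δ / (r ^ 2 + 1)) :=
      lt_min one_pos (div_pos hδ (by positivity))
    have h := key _ htpos (min_le_left _ _)
    have hb : (min 1 (δ / (r ^ 2 + 1)) / 2) * r ^ 2 ≤ δ := by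
      have h1 : min 1 (δ / (r ^ 2 + 1)) ≤ δ / (r ^ 2 + 1) := min_le_right _ _
      have h2 : (δ / (r ^ 2 + 1)) * r ^ 2 ≤ δ := by
        rw [div_mul_eq_mul_div, div_le_iff₀ (by positivity)]
        nlinarith [sq_nonneg r]
      nlinarith [sq_nonneg r]
    linarith
  nlinarith [hfin, hr0, hK0]

set_option maxHeartbeats 1000000 in
theorem stmt4 {N M P : ℕ} (Φ : Euc N →L[ℝ] Euc M) (L : Euc P →L[ℝ] Euc N)
    (A : Euc P → ℝ) (hA : IsNorm A) (x₀ : Euc N)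
    (ε c : ℝ) (hε : 0 < ε) (hc : 0 < c) (w : Euc M) (hw : ‖w‖ ≤ ε)
    (η : Euc M) (α : Euc P) (hSC : SC Φ L A x₀ η α)
    (xs : Euc N)
    (hmin : ∀ x, obj Φ L A (Φ x₀ + w) (c * ε) xs ≤ obj Φ L A (Φ x₀ + w) (c * ε) x) :
    ‖Φ xs - Φ x₀‖ ≤ ε * (2 + c * ‖η‖) := by
  obtain ⟨hA0, hAsmul, hAadd⟩ := hA
  obtain ⟨-, hadj, hsub⟩ := hSC
  set L' := ContinuousLinearMap.adjoint L with hL'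
  set lam := c * ε with hlam
  have hlam_pos : 0 < lam := mul_pos hc hε
  set d : Euc M := Φ xs - Φ x₀ with hd
  set r := ‖d‖ with hr
  have hr0 : 0 ≤ r := norm_nonneg d
  have hηd : ⟪L α, xs - x₀⟫ = ⟪η, d⟫ := by
    rw [← hadj, ContinuousLinearMap.adjoint_inner_left, map_sub]
  have h1 : ⟪η, d⟫ ≤ A (L' xs) - A (L' x₀) := by
    have h := hsub xs
    simp only [Set.mem_setOf_eq] at h
    rw [hηd] at h
    linarith
  set K : ℝ := ε + lam * ‖η‖ with hK
  have hK0 : 0 ≤ K := by positivity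
  clear_value lam r K
  set u : Euc M := w - d with hu
  clear_value u
  have hwd : ⟪w, d⟫ ≤ ε * r := by
    rw [hr]
    exact (real_inner_le_norm w d).trans (mul_le_mul_of_nonneg_right hw (norm_nonneg d))
  have hetad : -⟪η, d⟫ ≤ ‖η‖ * r := by
    rw [hr]
    have := abs_real_inner_le_norm η d
    have h2 := neg_abs_le (⟪η, d⟫)
    linarith
  have key : ∀ t : ℝ, 0 < t → t ≤ 1 → r ^ 2 ≤ K * r + (t / 2) * r ^ 2 := by
    intro t ht ht1
    have hmin' := hmin ((1 - t) • xs + t • x₀)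
    simp only [obj] at hmin'
    have hyx : Φ x₀ + w - Φ xs = u := by
      rw [hu, hd]; abel
    have hyxt : Φ x₀ + w - Φ ((1 - t) • xs + t • x₀) = u + t • d := by
      rw [map_add, map_smul, map_smul, hu, hd]
      module
    have hLxt : L' ((1 - t) • xs + t • x₀) = (1 - t) • (L' xs) + t • (L' x₀) := by
      rw [map_add, map_smul, map_smul]
    have hAxt : A (L' ((1 - t) • xs + t • x₀)) ≤ (1 - t) * A (L' xs) + t * A (L' x₀) := by
      rw [hLxt]
      calc A ((1 - t) • (L' xs) + t • (L' x₀)) ≤ A ((1 - t) • (L' xs)) + A (t • (L' x₀)) :=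
            hAadd _ _
        _ = (1 - t) * A (L' xs) + t * A (L' x₀) := by
            rw [hAsmul, hAsmul, abs_of_nonneg (by linarith), abs_of_nonneg ht.le]
    have hnorm : ‖u + t • d‖ ^ 2 = ‖u‖ ^ 2 + 2 * (t * ⟪u, d⟫) + t ^ 2 * r ^ 2 := by
      rw [norm_add_sq_real, real_inner_smul_right, norm_smul, Real.norm_eq_abs,
        abs_of_nonneg ht.le, mul_pow, hr]
    rw [hyx, hyxt, hnorm] at hmin'
    have hAxt' := mul_le_mul_of_nonneg_left hAxt hlam_pos.le
    set Rs : ℝ := A (L' xs) with hRs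
    set R0 : ℝ := A (L' x₀) with hR0
    set Rt : ℝ := A (L' ((1 - t) • xs + t • x₀)) with hRt
    set ip : ℝ := ⟪u, d⟫ with hip
    -- divide by t
    have hdiv : lam * (Rs - R0) ≤ ip + (t / 2) * r ^ 2 := by
      have ht2 : t * (lam * (Rs - R0)) ≤ t * (ip + (t / 2) * r ^ 2) := by
        nlinarith [hmin', hAxt']
      exact le_of_mul_le_mul_left ht2 ht
    have hud : ip = ⟪w, d⟫ - r ^ 2 := by
      rw [hip, hu, inner_sub_left, hr, real_inner_self_eq_norm_sq]
    have hed : lam * ⟪η, d⟫ ≤ lam * (Rs - R0) :=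
      mul_le_mul_of_nonneg_left h1 hlam_pos.le
    have hlη : lam * (-⟪η, d⟫) ≤ lam * (‖η‖ * r) := mul_le_mul_of_nonneg_left hetad hlam_pos.le
    rw [hud] at hdiv
    rw [hK]
    nlinarith [hdiv, hed, hwd, hlη]
  have hrK : r ≤ K := aux_scalar r K hr0 hK0 key
  have : K ≤ ε * (2 + c * ‖η‖) := by
    rw [hK, hlam]
    nlinarith [norm_nonneg η]
  linarith
end
end

section
/- For every y ∈ ℝ^M and every λ > 0, if x₁ and x₂ are both minimizers of problem (P), then Φ x₁ = Φ x₂. -/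
open RealInnerProductSpace

noncomputable section

set_option maxHeartbeats 1000000 in
theorem stmt10 {N M P : ℕ} (Φ : Euc N →L[ℝ] Euc M) (L : Euc P →L[ℝ] Euc N)
    (A : Euc P → ℝ) (hA : IsNorm A) (y : Euc M) (lam : ℝ) (hlam : 0 < lam)
    (x₁ x₂ : Euc N)
    (h₁ : ∀ z, obj Φ L A y lam x₁ ≤ obj Φ L A y lam z)
    (h₂ : ∀ z, obj Φ L A y lam x₂ ≤ obj Φ L A y lam z) :
    Φ x₁ = Φ x₂ := by
  obtain ⟨h0, hsmul, hadd⟩ := hA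
  have hval : obj Φ L A y lam x₁ = obj Φ L A y lam x₂ :=
    le_antisymm (h₁ x₂) (h₂ x₁)
  set xm : Euc N := (1/2 : ℝ) • (x₁ + x₂) with hxm
  have hPhi : Φ xm = (1/2 : ℝ) • (Φ x₁ + Φ x₂) := by
    simp [hxm, map_smul, map_add]
  have hLm : ContinuousLinearMap.adjoint L xm
      = (1/2 : ℝ) • ContinuousLinearMap.adjoint L x₁
        + (1/2 : ℝ) • ContinuousLinearMap.adjoint L x₂ := by
    simp [hxm, map_smul, map_add, smul_add]
  have hAm : A (ContinuousLinearMap.adjoint L xm)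
      ≤ (1/2 : ℝ) * A (ContinuousLinearMap.adjoint L x₁)
        + (1/2 : ℝ) * A (ContinuousLinearMap.adjoint L x₂) := by
    rw [hLm]
    calc A ((1/2 : ℝ) • ContinuousLinearMap.adjoint L x₁
          + (1/2 : ℝ) • ContinuousLinearMap.adjoint L x₂)
        ≤ A ((1/2 : ℝ) • ContinuousLinearMap.adjoint L x₁)
          + A ((1/2 : ℝ) • ContinuousLinearMap.adjoint L x₂) := hadd _ _
      _ = (1/2 : ℝ) * A (ContinuousLinearMap.adjoint L x₁)
          + (1/2 : ℝ) * A (ContinuousLinearMap.adjoint L x₂) := by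
          rw [hsmul, hsmul]
          norm_num [abs_of_pos]
  have hobj : ∀ z, obj Φ L A y lam z
      = (1/2 : ℝ) * ‖y - Φ z‖^2 + lam * A (ContinuousLinearMap.adjoint L z) :=
    fun _ => rfl
  set a : Euc M := y - Φ x₁ with ha
  set b : Euc M := y - Φ x₂ with hb
  have hmid : y - Φ xm = (1/2 : ℝ) • (a + b) := by
    rw [hPhi, ha, hb]
    module
  have hnorm : ‖y - Φ xm‖^2
      = (1/2 : ℝ) * ‖a‖^2 + (1/2 : ℝ) * ‖b‖^2 - (1/4 : ℝ) * ‖a - b‖^2 := by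
    rw [hmid, norm_smul]
    have hpar := parallelogram_law_with_norm ℝ a b
    have : ‖a + b‖^2 = 2 * ‖a‖^2 + 2 * ‖b‖^2 - ‖a - b‖^2 := by nlinarith
    simp only [Real.norm_eq_abs]
    rw [mul_pow, this, abs_of_pos (by norm_num : (0:ℝ) < 1/2)]
    ring
  have key : obj Φ L A y lam xm
      ≤ (1/2 : ℝ) * obj Φ L A y lam x₁ + (1/2 : ℝ) * obj Φ L A y lam x₂
        - (1/8 : ℝ) * ‖a - b‖^2 := by
    have hmul : lam * A (ContinuousLinearMap.adjoint L xm)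
        ≤ (1/2 : ℝ) * (lam * A (ContinuousLinearMap.adjoint L x₁))
          + (1/2 : ℝ) * (lam * A (ContinuousLinearMap.adjoint L x₂)) := by
      have h := mul_le_mul_of_nonneg_left hAm hlam.le
      calc lam * A (ContinuousLinearMap.adjoint L xm)
          ≤ lam * ((1/2 : ℝ) * A (ContinuousLinearMap.adjoint L x₁)
            + (1/2 : ℝ) * A (ContinuousLinearMap.adjoint L x₂)) := h
        _ = (1/2 : ℝ) * (lam * A (ContinuousLinearMap.adjoint L x₁))
            + (1/2 : ℝ) * (lam * A (ContinuousLinearMap.adjoint L x₂)) := by ring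
    rw [hobj, hobj, hobj, hnorm]
    linarith [hmul]
  have h1m := h₁ xm
  have hab : ‖a - b‖^2 ≤ 0 := by nlinarith
  have : a - b = 0 := by
    have := sq_nonneg ‖a - b‖
    have hz : ‖a - b‖^2 = 0 := le_antisymm hab this
    have : ‖a - b‖ = 0 := by nlinarith
    exact norm_eq_zero.mp this
  have : a = b := sub_eq_zero.mp this
  rw [ha, hb] at this
  exact sub_right_injective this
end
end
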